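/- Let (p_n) be a strictly increasing enumeration of the odd primes and let P be the Puiseux monoid generated by {1/(2^n p_n) : n ∈ ℕ}. Then P is atomic with atoms exactly {1/(2^n p_n) : n ∈ ℕ}, but P is not hereditarily atomic: the submonoid generated by {1/2^n : n ∈ ℕ} is a submonoid of P with no atoms. -/

import Mathlib

/-- `a` is an atom of the additive submonoid `P`. -/
def IsAtomOf {K : Type*} [AddCommMonoid K] (P : AddSubmonoid K) (a : K) : Prop :=
  a ∈ P ∧ a ≠ 0 ∧ ∀ x ∈ P, ∀ y ∈ P, a = x + y → x = 0 ∨ y = 0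

/-- `P` is atomic: every element is a finite sum of atoms. -/
def IsAtomicMonoid {K : Type*} [AddCommMonoid K] (P : AddSubmonoid K) : Prop :=
  ∀ x ∈ P, ∃ s : Multiset K, (∀ a ∈ s, IsAtomOf P a) ∧ s.sum = x

/-- The set of factorizations of `x` into atoms of `P`. -/
def Factorizations {K : Type*} [AddCommMonoid K] (P : AddSubmonoid K) (x : K) :
    Set (Multiset K) :=
  {s | (∀ a ∈ s, IsAtomOf P a) ∧ s.sum = x}

/-- `P` is an FF-monoid. -/
def IsFFMonoid {K : Type*} [AddCommMonoid K] (P : AddSubmonoid K) : Prop :=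
  IsAtomicMonoid P ∧ ∀ x ∈ P, (Factorizations P x).Finite

/-- `P` is a BF-monoid. -/
def IsBFMonoid {K : Type*} [AddCommMonoid K] (P : AddSubmonoid K) : Prop :=
  IsAtomicMonoid P ∧ ∀ x ∈ P, {n : ℕ | ∃ s ∈ Factorizations P x, Multiset.card s = n}.Finite
private def gg (p : ℕ → ℕ) (n : ℕ) : ℚ := 1 / (2 ^ n * (p n : ℚ))

private lemma gpos (p : ℕ → ℕ) (hp : ∀ n, (p n).Prime ∧ Odd (p n)) (n : ℕ) :
    0 < gg p n := by
  have h : (0:ℚ) < (p n : ℚ) := by exact_mod_cast (hp n).1.pos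
  unfold gg; positivity

private lemma gne (p : ℕ → ℕ) (hp : ∀ n, (p n).Prime ∧ Odd (p n)) (n : ℕ) :
    (2:ℚ) ^ n * (p n : ℚ) ≠ 0 := by
  have h : (0:ℚ) < (p n : ℚ) := by exact_mod_cast (hp n).1.pos
  positivity

private lemma ganti (p : ℕ → ℕ) (hmono : StrictMono p)
    (hp : ∀ n, (p n).Prime ∧ Odd (p n)) {k n : ℕ} (h : k < n) : gg p n < gg p k := by
  have hk : (0:ℚ) < (p k : ℚ) := by exact_mod_cast (hp k).1.pos
  have hn : (0:ℚ) < (p n : ℚ) := by exact_mod_cast (hp n).1.pos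
  have h1 : (2:ℚ) ^ k * (p k : ℚ) < 2 ^ n * (p n : ℚ) := by
    have hpk : (p k : ℚ) < (p n : ℚ) := by exact_mod_cast hmono h
    have h2 : (2:ℚ) ^ k ≤ 2 ^ n := by
      apply pow_le_pow_right₀ (by norm_num) h.le
    calc (2:ℚ) ^ k * (p k : ℚ) < 2 ^ k * (p n : ℚ) := by
          apply mul_lt_mul_of_pos_left hpk (by positivity)
      _ ≤ 2 ^ n * (p n : ℚ) := by
          apply mul_le_mul_of_nonneg_right h2 hn.le
  unfold gg
  apply one_div_lt_one_div_of_lt (by positivity) h1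

private lemma not_dvd (p : ℕ → ℕ) (hmono : StrictMono p)
    (hp : ∀ n, (p n).Prime ∧ Odd (p n)) {k n : ℕ} (h : n ≠ k) :
    ¬ p n ∣ 2 ^ k * p k := by
  intro hd
  rcases ((hp n).1.dvd_mul).mp hd with h2 | hpk
  · have := (hp n).1.dvd_of_dvd_pow h2
    have h2' : p n = 2 := (Nat.prime_dvd_prime_iff_eq (hp n).1 Nat.prime_two).mp this
    have := (hp n).2
    rw [h2'] at this
    simp [Nat.odd_iff] at this
  · have h2' : p n = p k := (Nat.prime_dvd_prime_iff_eq (hp n).1 (hp k).1).mp hpk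
    exact h (hmono.injective h2')

private lemma denom_aux (p : ℕ → ℕ) (hmono : StrictMono p)
    (hp : ∀ n, (p n).Prime ∧ Odd (p n)) (n : ℕ) (t : Multiset ℚ)
    (ht : ∀ a ∈ t, ∃ k, n < k ∧ a = gg p k) :
    ∃ N : ℕ, 0 < N ∧ ¬ p n ∣ N ∧ ∃ m : ℤ, t.sum * N = (m : ℚ) := by
  induction t using Multiset.induction_on with
  | empty => exact ⟨1, one_pos, fun h => (hp n).1.one_lt.ne' (Nat.dvd_one.mp h), 0, by simp⟩
  | cons a t ih =>
    obtain ⟨k, hk, rfl⟩ := ht a (Multiset.mem_cons_self a t)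
    obtain ⟨N, hN, hd, m, hm⟩ := ih (fun b hb => ht b (Multiset.mem_cons_of_mem hb))
    have hpk : 0 < p k := (hp k).1.pos
    refine ⟨2 ^ k * p k * N, by positivity, ?_, N + m * (2 ^ k * p k), ?_⟩
    · intro hdvd
      rcases ((hp n).1.dvd_mul).mp hdvd with h1 | h1
      · exact not_dvd p hmono hp hk.ne h1
      · exact hd h1
    · have hne : (2:ℚ) ^ k * (p k : ℚ) ≠ 0 := gne p hp k
      have key : gg p k * (2 ^ k * (p k : ℚ)) = 1 := by
        unfold gg; field_simp
      rw [Multiset.sum_cons]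
      push_cast
      calc (gg p k + t.sum) * (2 ^ k * (p k : ℚ) * N)
          = gg p k * (2 ^ k * (p k : ℚ)) * N + (t.sum * N) * (2 ^ k * (p k : ℚ)) := by ring
        _ = (N : ℚ) + (m : ℚ) * (2 ^ k * (p k : ℚ)) := by rw [key, hm]; ring

private lemma factor_unique (p : ℕ → ℕ) (hmono : StrictMono p)
    (hp : ∀ n, (p n).Prime ∧ Odd (p n)) (n : ℕ) (s : Multiset ℚ)
    (hs : ∀ a ∈ s, ∃ k, a = gg p k) (hsum : s.sum = gg p n) : s = {gg p n} := by
  classical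
  have hpos : ∀ a ∈ s, 0 < a := by
    intro a ha; obtain ⟨k, rfl⟩ := hs a ha; exact gpos p hp k
  have hle : ∀ a ∈ s, a ≤ gg p n := by
    intro a ha
    have := Multiset.single_le_sum (fun x hx => (hpos x hx).le) a ha
    rwa [hsum] at this
  set t := s.filter (fun a => ¬ a = gg p n) with hts
  have hsplit : s.filter (fun a => a = gg p n) + t = s := Multiset.filter_add_not _ s
  have hrep : s.filter (fun a => a = gg p n)
      = Multiset.replicate (s.count (gg p n)) (gg p n) := Multiset.filter_eq' s _
  set c := s.count (gg p n) with hc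
  have hsum2 : (c : ℚ) * gg p n + t.sum = gg p n := by
    have h0 : (Multiset.filter (fun a => a = gg p n) s + t).sum = s.sum := by rw [hsplit]
    rw [Multiset.sum_add, hrep, Multiset.sum_replicate, nsmul_eq_mul, hsum] at h0
    exact h0
  have ht : ∀ a ∈ t, ∃ k, n < k ∧ a = gg p k := by
    intro a ha
    have has : a ∈ s := Multiset.mem_of_mem_filter ha
    have hane : ¬ a = gg p n := by
      have ha' : a ∈ Multiset.filter (fun a => ¬ a = gg p n) s := ha
      exact (Multiset.mem_filter.mp ha').2
    obtain ⟨k, rfl⟩ := hs a has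
    refine ⟨k, ?_, rfl⟩
    rcases lt_trichotomy k n with h | h | h
    · exact absurd (hle _ has) (not_le.mpr (ganti p hmono hp h))
    · exact absurd (by rw [h]) hane
    · exact h
  have htnn : 0 ≤ t.sum := Multiset.sum_nonneg (fun a ha => by
    obtain ⟨k, _, rfl⟩ := ht a ha; exact (gpos p hp k).le)
  have hgn := gpos p hp n
  rcases Nat.eq_zero_or_pos c with hc0 | hc1
  · exfalso
    rw [hc0] at hsum2
    simp at hsum2
    obtain ⟨N, hN, hd, m, hm⟩ := denom_aux p hmono hp n t ht
    rw [hsum2] at hm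
    have hne := gne p hp n
    have hNq : (N : ℚ) = (m : ℚ) * (2 ^ n * (p n : ℚ)) := by
      unfold gg at hm; field_simp at hm; rw [div_eq_iff (by exact_mod_cast (hp n).1.pos.ne')] at hm; linear_combination hm
    have hNZ : (N : ℤ) = m * (2 ^ n * (p n : ℤ)) := by exact_mod_cast hNq
    have : (p n : ℤ) ∣ (N : ℤ) := ⟨m * 2 ^ n, by rw [hNZ]; ring⟩
    exact hd (by exact_mod_cast this)
  · have hcc : c = 1 := by
      by_contra hne1
      have h2 : 2 ≤ c := by omega
      have : (2:ℚ) ≤ (c : ℚ) := by exact_mod_cast h2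
      nlinarith
    rw [hcc] at hsum2
    have htz : t.sum = 0 := by push_cast at hsum2; linarith
    have ht0 : t = 0 := by
      by_contra h0
      obtain ⟨a, ha⟩ := Multiset.exists_mem_of_ne_zero h0
      obtain ⟨k, _, rfl⟩ := ht a ha
      have := Multiset.single_le_sum (fun x hx => by
        obtain ⟨j, _, rfl⟩ := ht x hx; exact (gpos p hp j).le) _ ha
      rw [htz] at this
      exact absurd this (not_le.mpr (gpos p hp k))
    rw [← hsplit, hrep, hcc, ht0]
    simp

private lemma mem_rep {G : Set ℚ} {x : ℚ} (hx : x ∈ AddSubmonoid.closure G) :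
    ∃ s : Multiset ℚ, (∀ a ∈ s, a ∈ G) ∧ s.sum = x := by
  refine AddSubmonoid.closure_induction
    (motive := fun x _ => ∃ s : Multiset ℚ, (∀ a ∈ s, a ∈ G) ∧ s.sum = x) ?_ ?_ ?_ hx
  · intro a ha; exact ⟨{a}, by simpa using ha, by simp⟩
  · exact ⟨0, by simp, by simp⟩
  · rintro a b _ _ ⟨s, hs, rfl⟩ ⟨u, hu, rfl⟩
    exact ⟨s + u, fun x hx => by
      rcases Multiset.mem_add.mp hx with h | h
      exacts [hs x h, hu x h], by simp⟩

theorem atomic_not_hereditarily_atomic (p : ℕ → ℕ) (hmono : StrictMono p)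
    (hp : ∀ n, (p n).Prime ∧ Odd (p n))
    (hall : ∀ q : ℕ, q.Prime → Odd q → ∃ n, p n = q)
    (P : AddSubmonoid ℚ)
    (hgen : AddSubmonoid.closure {x : ℚ | ∃ n : ℕ, x = 1 / (2 ^ n * (p n : ℚ))} = P) :
    IsAtomicMonoid P ∧
      {a | IsAtomOf P a} = {x : ℚ | ∃ n : ℕ, x = 1 / (2 ^ n * (p n : ℚ))} ∧
      AddSubmonoid.closure {x : ℚ | ∃ n : ℕ, x = 1 / (2 ^ n : ℚ)} ≤ P ∧
      ∀ a : ℚ, ¬IsAtomOf (AddSubmonoid.closure {x : ℚ | ∃ n : ℕ, x = 1 / (2 ^ n : ℚ)}) a := by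
  subst hgen
  set G : Set ℚ := {x : ℚ | ∃ n : ℕ, x = 1 / (2 ^ n * (p n : ℚ))} with hG
  have hGg : ∀ x, x ∈ G ↔ ∃ n, x = gg p n := by intro x; rfl
  -- each generator is an atom
  have hatom : ∀ n, IsAtomOf (AddSubmonoid.closure G) (gg p n) := by
    intro n
    refine ⟨AddSubmonoid.subset_closure ⟨n, rfl⟩, (gpos p hp n).ne', ?_⟩
    intro x hx y hy hxy
    obtain ⟨s, hs, rfl⟩ := mem_rep hx
    obtain ⟨u, hu, rfl⟩ := mem_rep hy
    have hsum : (s + u).sum = gg p n := by rw [Multiset.sum_add, ← hxy]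
    have := factor_unique p hmono hp n (s + u)
      (fun a ha => by
        rcases Multiset.mem_add.mp ha with h | h
        exacts [(hGg a).mp (hs a h), (hGg a).mp (hu a h)]) hsum
    have hcard : Multiset.card s + Multiset.card u = 1 := by
      have := congrArg Multiset.card this
      simpa using this
    rcases Nat.eq_zero_or_pos (Multiset.card s) with h | h
    · left; rw [Multiset.card_eq_zero.mp h]; simp
    · right
      have : Multiset.card u = 0 := by omega
      rw [Multiset.card_eq_zero.mp this]; simp
  refine ⟨?_, ?_, ?_, ?_⟩
  · -- atomic
    intro x hx
    obtain ⟨s, hs, rfl⟩ := mem_rep hx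
    exact ⟨s, fun a ha => by obtain ⟨k, rfl⟩ := (hGg a).mp (hs a ha); exact hatom k, rfl⟩
  · -- atoms = generators
    ext a
    constructor
    · rintro ⟨haP, ha0, hsplit⟩
      obtain ⟨s, hs, rfl⟩ := mem_rep haP
      have hs0 : s ≠ 0 := by rintro rfl; simp at ha0
      obtain ⟨b, hb⟩ := Multiset.exists_mem_of_ne_zero hs0
      obtain ⟨s', rfl⟩ := Multiset.exists_cons_of_mem hb
      have hbG : b ∈ G := hs b (Multiset.mem_cons_self b s')
      have hbP : b ∈ AddSubmonoid.closure G := AddSubmonoid.subset_closure hbG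
      have hs'P : s'.sum ∈ AddSubmonoid.closure G :=
        AddSubmonoid.multiset_sum_mem _ s' (fun a ha =>
          AddSubmonoid.subset_closure (hs a (Multiset.mem_cons_of_mem ha)))
      have := hsplit b hbP s'.sum hs'P (by simp)
      rcases this with h | h
      · obtain ⟨k, rfl⟩ := (hGg b).mp hbG
        exact absurd h (gpos p hp k).ne'
      · rw [Multiset.sum_cons, h, add_zero]
        exact hbG
    · rintro ⟨n, rfl⟩
      exact hatom n
  · -- dyadic submonoid ≤ P
    rw [AddSubmonoid.closure_le]
    rintro x ⟨n, rfl⟩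
    have : (1 : ℚ) / 2 ^ n = p n • gg p n := by
      rw [nsmul_eq_mul]
      have hne : (p n : ℚ) ≠ 0 := by
        exact_mod_cast (hp n).1.pos.ne'
      unfold gg; field_simp
    rw [this]
    exact AddSubmonoid.nsmul_mem _ (AddSubmonoid.subset_closure (show gg p n ∈ G from ⟨n, rfl⟩)) _
  · -- antimatter
    intro a ha
    obtain ⟨haD, ha0, hsplit⟩ := ha
    set D := AddSubmonoid.closure {x : ℚ | ∃ n : ℕ, x = 1 / (2 ^ n : ℚ)} with hD
    have hhalf : ∀ x ∈ D, x / 2 ∈ D := by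
      intro x hx
      refine AddSubmonoid.closure_induction (motive := fun x _ => x / 2 ∈ D) ?_ ?_ ?_ hx
      · rintro b ⟨n, rfl⟩
        refine AddSubmonoid.subset_closure ⟨n + 1, ?_⟩
        rw [pow_succ]; ring
      · simpa using D.zero_mem
      · intro b c _ _ hb hc
        have : (b + c) / 2 = b / 2 + c / 2 := by ring
        rw [this]; exact D.add_mem hb hc
    have h2 : a = a / 2 + a / 2 := by ring
    rcases hsplit (a / 2) (hhalf a haD) (a / 2) (hhalf a haD) h2 with h | h <;>
      exact ha0 (by rw [h2, h]; ring)
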